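/- Let d_K be a negative integer with d_K ≡ 0 or 1 (mod 4) and d_K ≤ −7, and set θ = √(d_K)/2 if d_K ≡ 0 (mod 4) and θ = (−1+√(d_K))/2 if d_K ≡ 1 (mod 4), a point of the upper half-plane ℍ (here √(d_K) = i√(−d_K)). Then for every integer N ≥ 2, the complex number ∏_{1 ≤ w ≤ N/2, gcd(w,N)=1} g_{(0, w/N)}^{12N/gcd(6,N)}(θ) is real; indeed it equals ∏_{1 ≤ w ≤ N/2, gcd(w,N)=1} q_θ^{N/gcd(6,N)} · (2 sin(wπ/N))^{12N/gcd(6,N)} · ∏_{n=1}^∞ (1 − 2cos(2wπ/N)·q_θ^n + q_θ^{2n})^{12N/gcd(6,N)}, where q_θ = e^{2πiθ} is real. -/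

import Mathlib

/-- The Siegel function `g_{(r₁,r₂)}(τ)`, defined by the product expansion
`g_{(r₁,r₂)}(τ) = -q_τ^{B₂(r₁)/2} e^{πi r₂(r₁-1)} (1-q_z) ∏_{n≥1} (1-q_τ^n q_z)(1-q_τ^n q_z⁻¹)`
where `B₂(X) = X² - X + 1/6`, `q_τ = e^{2πiτ}` and `q_z = e^{2πiz}` with `z = r₁τ + r₂`. -/
noncomputable def siegelG (r : ℚ × ℚ) (τ : ℂ) : ℂ :=
  -Complex.exp (2 * Real.pi * Complex.I * τ * (((r.1 : ℂ) ^ 2 - (r.1 : ℂ) + 1 / 6) / 2)) *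
    Complex.exp (Real.pi * Complex.I * (r.2 : ℂ) * ((r.1 : ℂ) - 1)) *
    (1 - Complex.exp (2 * Real.pi * Complex.I * ((r.1 : ℂ) * τ + (r.2 : ℂ)))) *
    ∏' n : ℕ,
      ((1 - Complex.exp (2 * Real.pi * Complex.I * (((n : ℂ) + 1) * τ + ((r.1 : ℂ) * τ + (r.2 : ℂ))))) *
        (1 - Complex.exp (2 * Real.pi * Complex.I * (((n : ℂ) + 1) * τ - ((r.1 : ℂ) * τ + (r.2 : ℂ))))))

/-- `|log(1+t)| ≤ 2|t|` for `|t| ≤ 1/2`. -/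
lemma SiegelAux.abs_log_one_add_le {t : ℝ} (h : |t| ≤ 1/2) : |Real.log (1 + t)| ≤ 2 * |t| := by
  have ht1 : -(1/2 : ℝ) ≤ t := (abs_le.mp h).1
  have ht2 : t ≤ 1/2 := (abs_le.mp h).2
  have hpos : (0:ℝ) < 1 + t := by linarith
  have hA : Real.log (1 + t) ≤ t := by
    have := Real.log_le_sub_one_of_pos hpos; linarith
  have hB : -Real.log (1 + t) ≤ (1 + t)⁻¹ - 1 := by
    have := Real.log_le_sub_one_of_pos (inv_pos.mpr hpos)
    rwa [Real.log_inv] at this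
  rw [abs_le]
  constructor
  · have hinv : (1 + t)⁻¹ * (1 + t) = 1 := inv_mul_cancel₀ (ne_of_gt hpos)
    rcases le_or_gt 0 t with h0 | h0
    · have : (1 + t)⁻¹ ≤ 1 := by
        rw [inv_le_one_iff₀]; right; linarith
      have habs : |t| = t := abs_of_nonneg h0
      nlinarith
    · have habs : |t| = -t := abs_of_neg h0
      have : (1 + t)⁻¹ ≤ 1 - 2*t := by
        rw [inv_le_iff_one_le_mul₀ hpos]; nlinarith
      nlinarith
  · have : t ≤ |t| := le_abs_self t
    nlinarith [abs_nonneg t]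

lemma SiegelAux.abs_bound {c x : ℝ} (hc : |c| ≤ 2) (hx : |x| ≤ 6⁻¹) (n : ℕ) :
    |x ^ (2*(n+1)) - c * x ^ (n+1)| ≤ 3 * |x| ^ (n+1) := by
  have h1 : |x ^ (2*(n+1))| ≤ |x| ^ (n+1) := by
    rw [_root_.abs_pow]
    exact pow_le_pow_of_le_one (abs_nonneg x) (by linarith [abs_nonneg x]) (by omega)
  have h2 : |c * x ^ (n+1)| ≤ 2 * |x| ^ (n+1) := by
    rw [abs_mul, _root_.abs_pow]
    exact mul_le_mul_of_nonneg_right hc (by positivity)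
  calc |x ^ (2*(n+1)) - c * x ^ (n+1)| ≤ |x ^ (2*(n+1))| + |c * x ^ (n+1)| := abs_sub _ _
    _ ≤ |x| ^ (n+1) + 2 * |x| ^ (n+1) := add_le_add h1 h2
    _ = 3 * |x| ^ (n+1) := by ring

lemma SiegelAux.small {c x : ℝ} (hc : |c| ≤ 2) (hx : |x| ≤ 6⁻¹) (n : ℕ) :
    |x ^ (2*(n+1)) - c * x ^ (n+1)| ≤ 1/2 := by
  refine (SiegelAux.abs_bound hc hx n).trans ?_
  have : |x| ^ (n+1) ≤ |x| :=
    pow_le_of_le_one (abs_nonneg x) (by linarith [abs_nonneg x]) (by omega)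
  linarith

lemma SiegelAux.pos {c x : ℝ} (hc : |c| ≤ 2) (hx : |x| ≤ 6⁻¹) (n : ℕ) :
    0 < 1 - c * x ^ (n+1) + x ^ (2*(n+1)) := by
  have := SiegelAux.small hc hx n
  have h := abs_le.mp this
  linarith [h.1]

lemma SiegelAux.multipliable {c x : ℝ} (hc : |c| ≤ 2) (hx : |x| ≤ 6⁻¹) :
    Multipliable (fun n : ℕ => 1 - c * x ^ (n+1) + x ^ (2*(n+1))) := by
  have hsum : Summable (fun n : ℕ => Real.log (1 - c * x ^ (n+1) + x ^ (2*(n+1)))) := by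
    have hg : Summable (fun n : ℕ => 6 * |x| * |x| ^ n) :=
      (summable_geometric_of_lt_one (abs_nonneg x) (by linarith [abs_nonneg x] : |x| < 1)).mul_left _
    refine Summable.of_norm_bounded hg fun n => ?_
    have h1 : (1 : ℝ) - c * x ^ (n+1) + x ^ (2*(n+1)) = 1 + (x ^ (2*(n+1)) - c * x ^ (n+1)) := by
      ring
    rw [Real.norm_eq_abs, h1]
    calc |Real.log (1 + (x ^ (2*(n+1)) - c * x ^ (n+1)))|
        ≤ 2 * |x ^ (2*(n+1)) - c * x ^ (n+1)| :=
          SiegelAux.abs_log_one_add_le (SiegelAux.small hc hx n)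
      _ ≤ 2 * (3 * |x| ^ (n+1)) := by linarith [SiegelAux.abs_bound hc hx n]
      _ = 6 * |x| * |x| ^ n := by rw [pow_succ]; ring
  exact Real.multipliable_of_summable_log (fun n => SiegelAux.pos hc hx n) hsum

lemma SiegelAux.ofReal_tprod {f : ℕ → ℝ} (hf : Multipliable f) :
    ((∏' n, f n : ℝ) : ℂ) = ∏' n, ((f n : ℝ) : ℂ) :=
  hf.map_tprod Complex.ofRealHom Complex.continuous_ofReal

lemma SiegelAux.tprod_pow {f : ℕ → ℝ} (hf : Multipliable f) (k : ℕ) :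
    (∏' n, f n) ^ k = ∏' n, (f n) ^ k :=
  hf.map_tprod (powMonoidHom k) (continuous_pow k)

lemma SiegelAux.exp_sub_exp (z : ℂ) :
    Complex.exp (z * Complex.I) - Complex.exp (-z * Complex.I) = 2 * Complex.I * Complex.sin z := by
  rw [Complex.exp_mul_I, show -z * Complex.I = -z * Complex.I from rfl, Complex.exp_mul_I,
    Complex.cos_neg, Complex.sin_neg]
  ring

/-- The key computation: the `12m`-th power of `g_{(0,r)}(θ)` is an explicit real number. -/
lemma SiegelAux.siegelG_pow (qR : ℝ) (h6 : |qR| ≤ 6⁻¹) (θ : ℂ)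
    (hq : (qR : ℂ) = Complex.exp (2 * Real.pi * Complex.I * θ)) (r : ℚ) (m : ℕ) :
    siegelG (0, r) θ ^ (12 * m) =
      ((qR ^ m * (2 * Real.sin ((r : ℝ) * Real.pi)) ^ (12 * m) *
        ∏' n : ℕ, (1 - 2 * Real.cos (2 * (r : ℝ) * Real.pi) * qR ^ (n + 1) +
          qR ^ (2 * (n + 1))) ^ (12 * m) : ℝ) : ℂ) := by
  set a : ℝ := (r : ℝ) with ha
  set c : ℝ := 2 * Real.cos (2 * a * Real.pi) with hc
  have hcabs : |c| ≤ 2 := by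
    rw [hc, abs_mul]
    have h2 : |(2:ℝ)| = 2 := by norm_num
    rw [h2]
    nlinarith [Real.abs_cos_le_one (2 * a * Real.pi), abs_nonneg (Real.cos (2 * a * Real.pi))]
  have hF : Multipliable (fun n : ℕ => 1 - c * qR ^ (n+1) + qR ^ (2*(n+1))) :=
    SiegelAux.multipliable hcabs h6
  have hra : ((r : ℚ) : ℂ) = (a : ℂ) := by rw [ha]; push_cast; rfl
  have hI2 : Complex.I * Complex.I = -1 := Complex.I_mul_I
  -- each tprod factor is real
  have hfac : ∀ n : ℕ,
      (1 - Complex.exp (2 * Real.pi * Complex.I * (((n : ℂ) + 1) * θ + (((0:ℚ) : ℂ) * θ + ((r:ℚ) : ℂ))))) *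
        (1 - Complex.exp (2 * Real.pi * Complex.I * (((n : ℂ) + 1) * θ - (((0:ℚ) : ℂ) * θ + ((r:ℚ) : ℂ))))) =
      (((1 - c * qR ^ (n+1) + qR ^ (2*(n+1)) : ℝ)) : ℂ) := by
    intro n
    have h1 : Complex.exp (2 * Real.pi * Complex.I * (((n : ℂ) + 1) * θ + (((0:ℚ) : ℂ) * θ + ((r:ℚ) : ℂ)))) =
        (qR : ℂ) ^ (n+1) * Complex.exp ((2 * a * Real.pi : ℂ) * Complex.I) := by
      rw [show 2 * (Real.pi : ℂ) * Complex.I * (((n : ℂ) + 1) * θ + (((0:ℚ) : ℂ) * θ + ((r:ℚ) : ℂ))) =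
          (((n+1 : ℕ) : ℂ)) * (2 * (Real.pi:ℂ) * Complex.I * θ) + (2 * (a:ℂ) * (Real.pi:ℂ)) * Complex.I from by
        rw [hra]; push_cast; ring]
      rw [Complex.exp_add, Complex.exp_nat_mul, ← hq]
    have h2 : Complex.exp (2 * Real.pi * Complex.I * (((n : ℂ) + 1) * θ - (((0:ℚ) : ℂ) * θ + ((r:ℚ) : ℂ)))) =
        (qR : ℂ) ^ (n+1) * Complex.exp (-(2 * a * Real.pi : ℂ) * Complex.I) := by
      rw [show 2 * (Real.pi : ℂ) * Complex.I * (((n : ℂ) + 1) * θ - (((0:ℚ) : ℂ) * θ + ((r:ℚ) : ℂ))) =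
          (((n+1 : ℕ) : ℂ)) * (2 * (Real.pi:ℂ) * Complex.I * θ) + (-(2 * (a:ℂ) * (Real.pi:ℂ))) * Complex.I from by
        rw [hra]; push_cast; ring]
      rw [Complex.exp_add, Complex.exp_nat_mul, ← hq]
    rw [h1, h2, Complex.exp_mul_I, Complex.exp_mul_I, Complex.cos_neg, Complex.sin_neg]
    have hcos : Complex.cos ((2 * a * Real.pi : ℝ) : ℂ) = ((Real.cos (2 * a * Real.pi) : ℝ) : ℂ) :=
      (Complex.ofReal_cos _).symm
    have hsin : Complex.sin ((2 * a * Real.pi : ℝ) : ℂ) = ((Real.sin (2 * a * Real.pi) : ℝ) : ℂ) :=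
      (Complex.ofReal_sin _).symm
    have hpyth : ((Real.sin (2*a*Real.pi) : ℂ))^2 + ((Real.cos (2*a*Real.pi) : ℂ))^2 = 1 := by
      norm_cast
      exact Real.sin_sq_add_cos_sq _
    push_cast [hc]
    rw [show ((2:ℂ) * a * Real.pi) = (((2 * a * Real.pi : ℝ)) : ℂ) from by push_cast; ring] at *
    rw [hcos, hsin]
    rw [pow_mul]
    linear_combination (-((qR:ℂ)^(n+1))^2 * ((Real.sin (2*a*Real.pi) : ℂ))^2) * hI2 +
      ((qR:ℂ)^(n+1))^2 * hpyth
  -- prefactor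
  have hpre : -Complex.exp (2 * Real.pi * Complex.I * θ * (((((0:ℚ)) : ℂ) ^ 2 - (((0:ℚ)) : ℂ) + 1 / 6) / 2)) *
      Complex.exp (Real.pi * Complex.I * ((r:ℚ) : ℂ) * ((((0:ℚ)) : ℂ) - 1)) *
      (1 - Complex.exp (2 * Real.pi * Complex.I * ((((0:ℚ)) : ℂ) * θ + ((r:ℚ) : ℂ)))) =
      Complex.exp (2 * Real.pi * Complex.I * θ * (1/12)) *
        (2 * Complex.I * ((Real.sin (a * Real.pi) : ℝ) : ℂ)) := by
    have e1 : (2 : ℂ) * Real.pi * Complex.I * θ * ((((0:ℚ):ℂ)^2 - ((0:ℚ):ℂ) + 1/6)/2) =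
        2 * Real.pi * Complex.I * θ * (1/12) := by push_cast; ring
    have e2 : (Real.pi : ℂ) * Complex.I * ((r:ℚ):ℂ) * (((0:ℚ):ℂ) - 1) =
        -((a * Real.pi : ℝ) : ℂ) * Complex.I := by rw [hra]; push_cast; ring
    have e3 : (2 : ℂ) * Real.pi * Complex.I * (((0:ℚ):ℂ) * θ + ((r:ℚ):ℂ)) =
        ((2 * (a * Real.pi) : ℝ) : ℂ) * Complex.I := by rw [hra]; push_cast; ring
    rw [e1, e2, e3]
    have key : Complex.exp (-((a * Real.pi : ℝ) : ℂ) * Complex.I) *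
        (1 - Complex.exp (((2 * (a * Real.pi) : ℝ) : ℂ) * Complex.I)) =
        -(2 * Complex.I * ((Real.sin (a * Real.pi) : ℝ) : ℂ)) := by
      rw [mul_sub, mul_one, ← Complex.exp_add]
      rw [show -((a * Real.pi : ℝ) : ℂ) * Complex.I + ((2 * (a * Real.pi) : ℝ) : ℂ) * Complex.I =
          ((a * Real.pi : ℝ) : ℂ) * Complex.I from by push_cast; ring]
      rw [Complex.ofReal_sin, ← SiegelAux.exp_sub_exp]
      ring
    calc -Complex.exp (2 * Real.pi * Complex.I * θ * (1/12)) *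
          Complex.exp (-((a * Real.pi : ℝ) : ℂ) * Complex.I) *
          (1 - Complex.exp (((2 * (a * Real.pi) : ℝ) : ℂ) * Complex.I))
        = -(Complex.exp (2 * Real.pi * Complex.I * θ * (1/12)) *
            (Complex.exp (-((a * Real.pi : ℝ) : ℂ) * Complex.I) *
              (1 - Complex.exp (((2 * (a * Real.pi) : ℝ) : ℂ) * Complex.I)))) := by ring
      _ = _ := by rw [key]; ring
  -- assemble
  rw [siegelG]
  simp only []
  rw [hpre, tprod_congr hfac, ← SiegelAux.ofReal_tprod hF]
  rw [mul_pow, mul_pow, mul_pow, mul_pow]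
  have hexp12 : Complex.exp (2 * Real.pi * Complex.I * θ * (1/12)) ^ (12 * m) = ((qR : ℂ)) ^ m := by
    rw [← Complex.exp_nat_mul, hq, ← Complex.exp_nat_mul]
    congr 1
    push_cast
    ring
  have hI12 : Complex.I ^ (12 * m) = 1 := by
    rw [show 12 * m = 4 * (3 * m) from by ring, pow_mul, Complex.I_pow_four, one_pow]
  rw [hexp12, hI12, ← SiegelAux.tprod_pow hF (12*m)]
  push_cast
  ring

/-- Let `d_K ≤ -7` be a negative integer congruent to `0` or `1` mod `4`, and `θ` the associated
CM point. For every `N ≥ 2`, the value `∏_{1 ≤ w ≤ N/2, gcd(w,N)=1} g_{(0,w/N)}^{12N/gcd(6,N)}(θ)`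
is real; indeed `q_θ = e^{2πiθ}` is a real number and the value equals
`∏_w q_θ^{N/gcd(6,N)} (2 sin(wπ/N))^{12N/gcd(6,N)} ∏_{n≥1} (1 - 2cos(2wπ/N) q_θ^n + q_θ^{2n})^{12N/gcd(6,N)}`. -/
theorem prod_siegelG_real (d : ℤ) (hd : d ≤ -7) (hd4 : d % 4 = 0 ∨ d % 4 = 1)
    (θ : ℂ)
    (hθ : θ = if d % 4 = 0 then Complex.I * (Real.sqrt (-(d : ℝ)) : ℂ) / 2
      else (-1 + Complex.I * (Real.sqrt (-(d : ℝ)) : ℂ)) / 2)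
    (N : ℕ) (hN : 2 ≤ N) :
    ∃ qθ : ℝ, (qθ : ℂ) = Complex.exp (2 * Real.pi * Complex.I * θ) ∧
      ∏ w ∈ Finset.filter (fun w => Nat.gcd w N = 1) (Finset.Icc 1 (N / 2)),
          siegelG (0, (w : ℚ) / (N : ℚ)) θ ^ (12 * N / Nat.gcd 6 N) =
        ((∏ w ∈ Finset.filter (fun w => Nat.gcd w N = 1) (Finset.Icc 1 (N / 2)),
            qθ ^ (N / Nat.gcd 6 N) *
              (2 * Real.sin ((w : ℝ) * Real.pi / (N : ℝ))) ^ (12 * N / Nat.gcd 6 N) *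
              ∏' n : ℕ,
                (1 - 2 * Real.cos (2 * (w : ℝ) * Real.pi / (N : ℝ)) * qθ ^ (n + 1) +
                    qθ ^ (2 * (n + 1))) ^ (12 * N / Nat.gcd 6 N) : ℝ) : ℂ) := by
  set s : ℝ := Real.sqrt (-(d : ℝ)) with hs
  have hs2 : (2 : ℝ) ≤ s := by
    have h4 : (4 : ℝ) ≤ -(d : ℝ) := by
      have : (d : ℝ) ≤ -7 := by exact_mod_cast hd
      linarith
    calc (2:ℝ) = Real.sqrt 4 := by
          rw [show (4:ℝ) = 2^2 from by norm_num, Real.sqrt_sq (by norm_num)]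
      _ ≤ s := Real.sqrt_le_sqrt h4
  have hπ : (3 : ℝ) ≤ Real.pi := Real.pi_gt_three.le
  have hps : (6 : ℝ) ≤ Real.pi * s := by nlinarith [Real.pi_pos]
  set qR : ℝ := if d % 4 = 0 then Real.exp (-(Real.pi * s)) else -Real.exp (-(Real.pi * s))
    with hqR
  have habs : |qR| ≤ 6⁻¹ := by
    have h1 : |qR| = Real.exp (-(Real.pi*s)) := by
      rw [hqR]
      split_ifs
      · exact abs_of_pos (Real.exp_pos _)
      · rw [abs_neg]; exact abs_of_pos (Real.exp_pos _)
    rw [h1, Real.exp_neg]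
    have h2 : (6 : ℝ) ≤ Real.exp (Real.pi * s) := by
      have := Real.add_one_le_exp (Real.pi * s)
      linarith
    exact inv_anti₀ (by norm_num) h2
  have hq : (qR : ℂ) = Complex.exp (2 * Real.pi * Complex.I * θ) := by
    rw [hqR, hθ]
    rcases hd4 with h | h
    · rw [if_pos h, if_pos h]
      rw [show (2:ℂ) * Real.pi * Complex.I * (Complex.I * (s:ℂ) / 2) = ((-(Real.pi * s) : ℝ) : ℂ)
          from by push_cast; linear_combination ((Real.pi : ℂ) * s) * Complex.I_mul_I]
      rw [← Complex.ofReal_exp]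
    · have h0 : ¬ d % 4 = 0 := by omega
      rw [if_neg h0, if_neg h0]
      rw [show (2:ℂ) * Real.pi * Complex.I * ((-1 + Complex.I * (s:ℂ)) / 2) =
          ((-(Real.pi * s) : ℝ) : ℂ) + (Real.pi : ℂ) * Complex.I * (-1)
          from by push_cast; linear_combination ((Real.pi : ℂ) * s) * Complex.I_mul_I]
      rw [Complex.exp_add, ← Complex.ofReal_exp]
      have hm1 : Complex.exp ((Real.pi : ℂ) * Complex.I * (-1)) = -1 := by
        rw [show (Real.pi : ℂ) * Complex.I * (-1) = -(Real.pi * Complex.I) from by ring,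
          Complex.exp_neg, Complex.exp_pi_mul_I]
        norm_num
      rw [hm1]
      push_cast
      ring
  refine ⟨qR, hq, ?_⟩
  rw [Complex.ofReal_prod]
  refine Finset.prod_congr rfl fun w hw => ?_
  have hm : 12 * N / Nat.gcd 6 N = 12 * (N / Nat.gcd 6 N) :=
    Nat.mul_div_assoc 12 (Nat.gcd_dvd_right 6 N)
  rw [hm, SiegelAux.siegelG_pow qR habs θ hq ((w:ℚ)/(N:ℚ)) (N / Nat.gcd 6 N)]
  have harg : (((w:ℚ)/(N:ℚ) : ℚ) : ℝ) = (w:ℝ)/(N:ℝ) := by push_cast; ring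
  rw [harg, show (w:ℝ)/(N:ℝ) * Real.pi = (w:ℝ) * Real.pi / (N:ℝ) from by ring,
    show 2*((w:ℝ)/(N:ℝ)) * Real.pi = 2*(w:ℝ) * Real.pi / (N:ℝ) from by ring]
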